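/- Take boundary value b = 0 in the truncated backward European put recursion. Then V_E^0(0,0,0) = V^{TT}, the discounted truncated forward expectation of the put payoff. -/

import Mathlib

open Finset

open scoped Classical

noncomputable section

namespace HScut

/-- Level of a jump path `s : Fin n → ℤ` at time `t` (sum of the first `t` jumps). -/
def levelAt (n : ℕ) (s : Fin n → ℤ) (t : ℕ) : ℤ :=
  ∑ i ∈ Finset.univ.filter (fun i : Fin n => (i : ℕ) < t), s i

/-- Jump paths of length `n` with jumps of amplitude at most `m`. -/
def paths (n m : ℕ) : Finset (Fin n → ℤ) :=
  Fintype.piFinset fun _ => Finset.Icc (-(m : ℤ)) (m : ℤ)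

/-- Weight `π(s) = ∏ q (s i)` of a jump path. -/
def pathWeight (n : ℕ) (q : ℤ → ℝ) (s : Fin n → ℤ) : ℝ :=
  ∏ i, q (s i)

/-- Modified weight `π̃(s)`, where each `q (±i)` (`i ≠ 0`) is replaced by `max (q i) (q (-i))`
(which equals `w_i / n`). -/
def modWeight (n : ℕ) (q : ℤ → ℝ) (s : Fin n → ℤ) : ℝ :=
  ∏ i, (if s i = 0 then q 0 else max (q (s i)) (q (-s i)))

/-- `q^{(n)}(k)`: probability of a net balance of `k` cumulative jumps at maturity. -/
def qfull (n m : ℕ) (q : ℤ → ℝ) (k : ℤ) : ℝ :=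
  ∑ s ∈ (paths n m).filter (fun s => levelAt n s n = k), pathWeight n q s

/-- `q̃^{(n)}(k)`: enlarged probability of a net balance of `k` cumulative jumps at maturity. -/
def qtilde (n m : ℕ) (q : ℤ → ℝ) (k : ℤ) : ℝ :=
  ∑ s ∈ (paths n m).filter (fun s => levelAt n s n = k), modWeight n q s

/-- `q^{k̄,(n)}(k)`: probability of a net balance of `k` jumps at maturity while reaching at
some time a net balance higher than `k̄`. -/
def qup (n m : ℕ) (q : ℤ → ℝ) (kbar : ℕ) (k : ℤ) : ℝ :=
  ∑ s ∈ (paths n m).filter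
      (fun s => levelAt n s n = k ∧ ∃ t ≤ n, (kbar : ℤ) + 1 ≤ levelAt n s t),
    pathWeight n q s

/-- `q_{l̄}^{(n)}(k)`: probability of a net balance of `k` jumps at maturity while reaching at
some time a net balance lower than `-l̄`. -/
def qdown (n m : ℕ) (q : ℤ → ℝ) (lbar : ℕ) (k : ℤ) : ℝ :=
  ∑ s ∈ (paths n m).filter
      (fun s => levelAt n s n = k ∧ ∃ t ≤ n, levelAt n s t ≤ -(lbar : ℤ) - 1),
    pathWeight n q s

/-- `q^{cut,(n)}(k)`: probability of reaching level `k` at maturity without ever leaving the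
band `[-l̄, k̄]`. -/
def qcut (n m : ℕ) (q : ℤ → ℝ) (kbar lbar : ℕ) (k : ℤ) : ℝ :=
  ∑ s ∈ (paths n m).filter
      (fun s => levelAt n s n = k ∧
        ∀ t ≤ n, -(lbar : ℤ) ≤ levelAt n s t ∧ levelAt n s t ≤ (kbar : ℤ)),
    pathWeight n q s

/-- `P(j) = C(n,j) p^j (1-p)^(n-j)`. -/
def binomP (n : ℕ) (p : ℝ) (j : ℕ) : ℝ :=
  (n.choose j : ℝ) * p ^ j * (1 - p) ^ (n - j)

/-- Put payoff at the terminal node `(n, j, k)`. -/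
def putPayoff (n : ℕ) (S0 K σ dt h : ℝ) (j : ℕ) (k : ℤ) : ℝ :=
  max (K - S0 * Real.exp ((2 * (j : ℝ) - (n : ℝ)) * (σ * Real.sqrt dt) + h * (k : ℝ))) 0

/-- European put value `V` on the full tree. -/
def Vput (n m : ℕ) (q : ℤ → ℝ) (p S0 K σ τ h r : ℝ) : ℝ :=
  Real.exp (-(r * τ)) *
    ∑ k ∈ Finset.Icc (-((m : ℤ) * n)) ((m : ℤ) * n), ∑ j ∈ Finset.range (n + 1),
      putPayoff n S0 K σ (τ / n) h j k * binomP n p j * qfull n m q k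

/-- European put value `V^{TT}` on the truncated tree. -/
def VTT (n m : ℕ) (q : ℤ → ℝ) (p S0 K σ τ h r : ℝ) (kbar lbar : ℕ) : ℝ :=
  Real.exp (-(r * τ)) *
    ∑ k ∈ Finset.Icc (-(lbar : ℤ)) (kbar : ℤ), ∑ j ∈ Finset.range (n + 1),
      putPayoff n S0 K σ (τ / n) h j k * binomP n p j * qcut n m q kbar lbar k

/-- The sequence `W_i`: `W₁ = w₁`, `W_{i+1} = w_{i+1} + W_i^{(i+1)/i}` (real powers). -/
def Wseq (w : ℕ → ℝ) : ℕ → ℝ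
  | 0 => 0
  | 1 => w 1
  | (i + 2) => w (i + 2) + Wseq w (i + 1) ^ (((i : ℝ) + 2) / ((i : ℝ) + 1))

/-- `M_i = max { W_i, W_i^{(1-i)/i} }` (real powers). -/
def Mseq (w : ℕ → ℝ) (i : ℕ) : ℝ :=
  max (Wseq w i) (Wseq w i ^ ((1 - (i : ℝ)) / (i : ℝ)))

/-- `G = 2 m max{W_m, 1} e^{W_m} ∏_{i=1}^{m-1} M_i²`. -/
def Gconst (w : ℕ → ℝ) (m : ℕ) : ℝ :=
  2 * m * max (Wseq w m) 1 * Real.exp (Wseq w m) * ∏ i ∈ Finset.Icc 1 (m - 1), (Mseq w i) ^ 2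

/-- Value of the underlying at a node with (real) time index `i`, `j` up Brownian moves and
net jump level `l`. -/
def Sval (S0 σ dt h : ℝ) (i : ℝ) (j : ℕ) (l : ℤ) : ℝ :=
  S0 * Real.exp ((2 * (j : ℝ) - i) * (σ * Real.sqrt dt) + (l : ℝ) * h)

/-- Full backward European put price; `VEfull … d j l` is the value `V_E(n-d, j, l)`
(`d` = number of remaining steps). -/
def VEfull (n m : ℕ) (q : ℤ → ℝ) (p dt S0 K σ h r : ℝ) : ℕ → ℕ → ℤ → ℝ
  | 0, j, l => max (K - Sval S0 σ dt h (n : ℝ) j l) 0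
  | (d + 1), j, l =>
      Real.exp (-(r * dt)) *
        ∑ k ∈ Finset.Icc (-(m : ℤ)) (m : ℤ),
          (VEfull n m q p dt S0 K σ h r d (j + 1) (l + k) * p +
            VEfull n m q p dt S0 K σ h r d j (l + k) * (1 - p)) * q k

/-- Full backward American put price; `VAfull … d j l` is the value `V_A(n-d, j, l)`. -/
def VAfull (n m : ℕ) (q : ℤ → ℝ) (p dt S0 K σ h r : ℝ) : ℕ → ℕ → ℤ → ℝ
  | 0, j, l => max (K - Sval S0 σ dt h (n : ℝ) j l) 0
  | (d + 1), j, l =>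
      max
        (Real.exp (-(r * dt)) *
          ∑ k ∈ Finset.Icc (-(m : ℤ)) (m : ℤ),
            (VAfull n m q p dt S0 K σ h r d (j + 1) (l + k) * p +
              VAfull n m q p dt S0 K σ h r d j (l + k) * (1 - p)) * q k)
        (K - Sval S0 σ dt h ((n : ℝ) - (d + 1)) j l)

/-- Truncated backward European put price with boundary value `b`;
`VEtr … d j l` is the value `V_E^b(n-d, j, l)`. -/
def VEtr (n m : ℕ) (q : ℤ → ℝ) (p dt S0 K σ h r b : ℝ) (kbar lbar : ℕ) :
    ℕ → ℕ → ℤ → ℝ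
  | 0, j, l =>
      if -(lbar : ℤ) ≤ l ∧ l ≤ (kbar : ℤ) then max (K - Sval S0 σ dt h (n : ℝ) j l) 0 else b
  | (d + 1), j, l =>
      if -(lbar : ℤ) ≤ l ∧ l ≤ (kbar : ℤ) then
        Real.exp (-(r * dt)) *
          ∑ k ∈ Finset.Icc (-(m : ℤ)) (m : ℤ),
            (VEtr n m q p dt S0 K σ h r b kbar lbar d (j + 1) (l + k) * p +
              VEtr n m q p dt S0 K σ h r b kbar lbar d j (l + k) * (1 - p)) * q k
      else b

/-- Truncated backward American put price with boundary value `b`;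
`VAtr … d j l` is the value `V_A^b(n-d, j, l)`. -/
def VAtr (n m : ℕ) (q : ℤ → ℝ) (p dt S0 K σ h r b : ℝ) (kbar lbar : ℕ) :
    ℕ → ℕ → ℤ → ℝ
  | 0, j, l =>
      if -(lbar : ℤ) ≤ l ∧ l ≤ (kbar : ℤ) then max (K - Sval S0 σ dt h (n : ℝ) j l) 0 else b
  | (d + 1), j, l =>
      if -(lbar : ℤ) ≤ l ∧ l ≤ (kbar : ℤ) then
        max
          (Real.exp (-(r * dt)) *
            ∑ k ∈ Finset.Icc (-(m : ℤ)) (m : ℤ),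
              (VAtr n m q p dt S0 K σ h r b kbar lbar d (j + 1) (l + k) * p +
                VAtr n m q p dt S0 K σ h r b kbar lbar d j (l + k) * (1 - p)) * q k)
          (K - Sval S0 σ dt h ((n : ℝ) - (d + 1)) j l)
      else b

/-- The sum, over all jump-path prefixes that first exit the band `[-l̄, k̄]` at some time
`1 ≤ i ≤ n`, of the prefix probability times `b e^{-r i Δt}`. -/
def exitSum (n m : ℕ) (q : ℤ → ℝ) (r dt : ℝ) (kbar lbar : ℕ) (b : ℝ) : ℝ :=
  ∑ i ∈ Finset.Icc 1 n,
    ∑ y ∈ (paths i m).filter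
        (fun y =>
          (∀ t < i, -(lbar : ℤ) ≤ levelAt i y t ∧ levelAt i y t ≤ (kbar : ℤ)) ∧
          ¬(-(lbar : ℤ) ≤ levelAt i y i ∧ levelAt i y i ≤ (kbar : ℤ))),
      pathWeight i q y * (b * Real.exp (-(r * (i : ℝ) * dt)))

end HScut

open HScut

lemma levelAt_eq_sum_ite (n : ℕ) (s : Fin n → ℤ) (t : ℕ) :
    levelAt n s t = ∑ i : Fin n, if (i : ℕ) < t then s i else 0 := by
  rw [levelAt, Finset.sum_filter]

lemma levelAt_zero (n : ℕ) (s : Fin n → ℤ) : levelAt n s 0 = 0 := by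
  simp [levelAt_eq_sum_ite]

lemma levelAt_cons (d : ℕ) (k : ℤ) (s : Fin d → ℤ) (t : ℕ) :
    levelAt (d + 1) (Fin.cons k s) (t + 1) = k + levelAt d s t := by
  rw [levelAt_eq_sum_ite, levelAt_eq_sum_ite, Fin.sum_univ_succ]
  simp [Fin.cons_succ, Nat.succ_lt_succ_iff]

lemma pathWeight_cons (d : ℕ) (q : ℤ → ℝ) (k : ℤ) (s : Fin d → ℤ) :
    pathWeight (d + 1) q (Fin.cons k s) = q k * pathWeight d q s := by
  rw [pathWeight, Fin.prod_univ_succ]; simp [pathWeight]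

lemma sum_paths_succ (d m : ℕ) (F : (Fin (d + 1) → ℤ) → ℝ) :
    ∑ s ∈ paths (d + 1) m, F s =
      ∑ k ∈ Finset.Icc (-(m : ℤ)) (m : ℤ), ∑ s ∈ paths d m, F (Fin.cons k s) := by
  rw [← Finset.sum_product']
  refine Finset.sum_nbij' (fun s => (s 0, Fin.tail s)) (fun x => Fin.cons x.1 x.2) ?_ ?_ ?_ ?_ ?_
  · intro s hs
    simp only [Finset.mem_product, paths, Fintype.mem_piFinset] at hs ⊢
    exact ⟨hs 0, fun i => hs i.succ⟩
  · intro x hx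
    simp only [Finset.mem_product, paths, Fintype.mem_piFinset] at hx ⊢
    intro i
    refine Fin.cases ?_ ?_ i
    · simpa using hx.1
    · intro i; simpa using hx.2 i
  · intro s _; exact Fin.cons_self_tail s
  · intro x _; simp [Fin.tail_cons]
  · intro s _; rw [Fin.cons_self_tail]

lemma binomP_succ_succ (d j : ℕ) (p : ℝ) :
    binomP (d + 1) p (j + 1) = p * binomP d p j + (1 - p) * binomP d p (j + 1) := by
  rcases Nat.lt_trichotomy j d with h | h | h
  · have h1 : d - j = (d - (j + 1)) + 1 := by omega
    have h2 : d + 1 - (j + 1) = d - j := by omega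
    simp only [binomP, Nat.choose_succ_succ, h2]
    push_cast
    rw [h1]; ring
  · subst h
    simp [binomP, Nat.choose_succ_self, pow_succ]; ring
  · have h1 : Nat.choose (d + 1) (j + 1) = 0 := Nat.choose_eq_zero_of_lt (by omega)
    have h2 : Nat.choose d j = 0 := Nat.choose_eq_zero_of_lt h
    have h3 : Nat.choose d (j + 1) = 0 := Nat.choose_eq_zero_of_lt (by omega)
    simp [binomP, h1, h2, h3]

lemma pascal_sum (d : ℕ) (p : ℝ) (g : ℕ → ℝ) :
    ∑ j ∈ Finset.range (d + 2), binomP (d + 1) p j * g j =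
      p * ∑ j ∈ Finset.range (d + 1), binomP d p j * g (j + 1) +
      (1 - p) * ∑ j ∈ Finset.range (d + 1), binomP d p j * g j := by
  have e2 : ∑ j ∈ Finset.range (d + 1), binomP d p (j + 1) * g (j + 1) + binomP d p 0 * g 0
      = ∑ j ∈ Finset.range (d + 1), binomP d p j * g j := by
    rw [← Finset.sum_range_succ' (fun j => binomP d p j * g j), Finset.sum_range_succ]
    simp [binomP, Nat.choose_succ_self]
  rw [Finset.sum_range_succ' (fun j => binomP (d + 1) p j * g j)]
  simp only [binomP_succ_succ, add_mul]
  rw [Finset.sum_add_distrib]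
  have h0 : binomP (d + 1) p 0 = (1 - p) * binomP d p 0 := by
    simp [binomP, pow_succ]; ring
  rw [← e2, h0]
  simp only [mul_add, Finset.mul_sum, mul_assoc]
  ring

lemma pascal_sum_payoff (d j : ℕ) (p : ℝ) (G : ℕ → ℝ) :
    ∑ j' ∈ Finset.range (d + 1 + 1), binomP (d + 1) p j' * G (j + j') =
      p * ∑ j' ∈ Finset.range (d + 1), binomP d p j' * G (j + 1 + j') +
      (1 - p) * ∑ j' ∈ Finset.range (d + 1), binomP d p j' * G (j + j') := by
  rw [show d + 1 + 1 = d + 2 from rfl, pascal_sum d p (fun j' => G (j + j'))]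
  congr 2
  exact Finset.sum_congr rfl fun j' _ => by rw [show j + (j' + 1) = j + 1 + j' from by omega]

lemma VEtr_out (n m : ℕ) (q : ℤ → ℝ) (p dt S0 K σ h r : ℝ) (kbar lbar : ℕ)
    (d j : ℕ) (l : ℤ) (hl : ¬(-(lbar : ℤ) ≤ l ∧ l ≤ (kbar : ℤ))) :
    VEtr n m q p dt S0 K σ h r 0 kbar lbar d j l = 0 := by
  cases d <;> simp [VEtr, hl]

set_option maxRecDepth 10000 in
lemma VEtr_forward (n m : ℕ) (q : ℤ → ℝ) (p dt S0 K σ h r : ℝ) (kbar lbar : ℕ) :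
    ∀ (d : ℕ) (j : ℕ) (l : ℤ),
      VEtr n m q p dt S0 K σ h r 0 kbar lbar d j l =
        Real.exp (-(r * d * dt)) *
          ∑ s ∈ (paths d m).filter
              (fun s => ∀ t ≤ d,
                -(lbar : ℤ) ≤ l + levelAt d s t ∧ l + levelAt d s t ≤ (kbar : ℤ)),
            pathWeight d q s *
              ∑ j' ∈ Finset.range (d + 1),
                binomP d p j' * max (K - Sval S0 σ dt h n (j + j') (l + levelAt d s d)) 0 := by
  intro d
  induction d with
  | zero =>
    intro j l
    by_cases hb : -(lbar : ℤ) ≤ l ∧ l ≤ (kbar : ℤ)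
    · have hmem : ∀ s ∈ paths 0 m, ∀ t ≤ 0,
          -(lbar : ℤ) ≤ l + levelAt 0 s t ∧ l + levelAt 0 s t ≤ (kbar : ℤ) := by
        intro s _ t ht
        interval_cases t
        simpa [levelAt_zero] using hb
      rw [Finset.filter_true_of_mem hmem]
      have h0 : paths 0 m = {(default : Fin 0 → ℤ)} := by
        rw [paths, Fintype.piFinset_of_isEmpty, Finset.univ_unique]; congr 1; exact Subsingleton.elim _ _
      rw [h0, Finset.sum_singleton]
      simp [VEtr, hb, pathWeight, binomP, levelAt_zero]
    · rw [VEtr_out (hl := hb)]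
      have hemp : ∀ s ∈ paths 0 m, ¬ (∀ t ≤ 0,
          -(lbar : ℤ) ≤ l + levelAt 0 s t ∧ l + levelAt 0 s t ≤ (kbar : ℤ)) := by
        intro s _ hc
        exact hb (by simpa [levelAt_zero] using hc 0 le_rfl)
      rw [Finset.filter_eq_empty_iff.2 hemp]
      simp
  | succ d ih =>
    intro j l
    by_cases hb : -(lbar : ℤ) ≤ l ∧ l ≤ (kbar : ℤ)
    · have hexp : Real.exp (-(r * ((d + 1 : ℕ) : ℝ) * dt)) =
          Real.exp (-(r * dt)) * Real.exp (-(r * (d : ℝ) * dt)) := by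
        rw [← Real.exp_add]
        congr 1
        push_cast
        ring
      have hC : ∀ (k : ℤ) (s : Fin d → ℤ),
          ((∀ t ≤ d + 1, -(lbar : ℤ) ≤ l + levelAt (d + 1) (Fin.cons k s) t ∧
              l + levelAt (d + 1) (Fin.cons k s) t ≤ (kbar : ℤ)) ↔
           (∀ t ≤ d, -(lbar : ℤ) ≤ l + k + levelAt d s t ∧
              l + k + levelAt d s t ≤ (kbar : ℤ))) := by
        intro k s
        constructor
        · intro hc t ht
          have h2 := hc (t + 1) (by omega)
          rwa [levelAt_cons, ← add_assoc] at h2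
        · intro hc t ht
          cases t with
          | zero => simpa [levelAt_zero] using hb
          | succ t =>
            rw [levelAt_cons, ← add_assoc]
            exact hc t (by omega)
      simp only [VEtr, if_pos hb]
      conv_rhs => rw [hexp, Finset.sum_filter, sum_paths_succ d m, mul_assoc, Finset.mul_sum]
      simp only [ih]
      refine congrArg _ (Finset.sum_congr rfl fun k hk => ?_)
      have hadd : ∀ j' : ℕ, j + (j' + 1) = (j + 1) + j' := fun j' => by omega
      have hterm : ∀ s ∈ paths d m,
          (if (∀ t ≤ d + 1, -(lbar : ℤ) ≤ l + levelAt (d + 1) (Fin.cons k s) t ∧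
                l + levelAt (d + 1) (Fin.cons k s) t ≤ (kbar : ℤ)) then
              pathWeight (d + 1) q (Fin.cons k s) *
                ∑ j' ∈ Finset.range (d + 1 + 1),
                  binomP (d + 1) p j' *
                    max (K - Sval S0 σ dt h n (j + j')
                      (l + levelAt (d + 1) (Fin.cons k s) (d + 1))) 0
            else 0)
          = if (∀ t ≤ d, -(lbar : ℤ) ≤ l + k + levelAt d s t ∧
                l + k + levelAt d s t ≤ (kbar : ℤ)) then
              q k * pathWeight d q s *
                (p * ∑ j' ∈ Finset.range (d + 1),
                    binomP d p j' *
                      max (K - Sval S0 σ dt h n (j + 1 + j') (l + k + levelAt d s d)) 0 +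
                 (1 - p) * ∑ j' ∈ Finset.range (d + 1),
                    binomP d p j' *
                      max (K - Sval S0 σ dt h n (j + j') (l + k + levelAt d s d)) 0)
            else 0 := by
        intro s _
        rw [levelAt_cons, ← add_assoc, pathWeight_cons,
          pascal_sum_payoff d j p
            (fun x => max (K - Sval S0 σ dt h n x (l + k + levelAt d s d)) 0)]
        exact if_congr (hC k s) rfl rfl
      rw [Finset.sum_congr rfl hterm, ← Finset.sum_filter]
      have split : ∀ s ∈ (paths d m).filter
            (fun s => ∀ t ≤ d, -(lbar : ℤ) ≤ l + k + levelAt d s t ∧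
              l + k + levelAt d s t ≤ (kbar : ℤ)),
          q k * pathWeight d q s *
              (p * ∑ j' ∈ Finset.range (d + 1),
                  binomP d p j' *
                    max (K - Sval S0 σ dt h n (j + 1 + j') (l + k + levelAt d s d)) 0 +
               (1 - p) * ∑ j' ∈ Finset.range (d + 1),
                  binomP d p j' *
                    max (K - Sval S0 σ dt h n (j + j') (l + k + levelAt d s d)) 0)
            = (q k * p) * (pathWeight d q s * ∑ j' ∈ Finset.range (d + 1),
                  binomP d p j' *
                    max (K - Sval S0 σ dt h n (j + 1 + j') (l + k + levelAt d s d)) 0) +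
              (q k * (1 - p)) * (pathWeight d q s * ∑ j' ∈ Finset.range (d + 1),
                  binomP d p j' *
                    max (K - Sval S0 σ dt h n (j + j') (l + k + levelAt d s d)) 0) := by
        intro s _
        ring
      rw [Finset.sum_congr rfl split, Finset.sum_add_distrib, ← Finset.mul_sum, ← Finset.mul_sum]
      ring
    · rw [VEtr_out (hl := hb)]
      have hemp : ∀ s ∈ paths (d + 1) m, ¬ (∀ t ≤ d + 1,
          -(lbar : ℤ) ≤ l + levelAt (d + 1) s t ∧ l + levelAt (d + 1) s t ≤ (kbar : ℤ)) := by
        intro s _ hc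
        exact hb (by simpa [levelAt_zero] using hc 0 (by omega))
      rw [Finset.filter_eq_empty_iff.2 hemp]
      simp


/-- Lemma: with boundary value `b = 0`, the truncated backward European put price equals the
discounted truncated forward expectation: `V_E^0(0,0,0) = V^{TT}`. -/
theorem VE_zero_eq_VTT (n m : ℕ) (hn : 1 ≤ n) (hm : 1 ≤ m) (q : ℤ → ℝ)
    (hq : ∀ l : ℤ, -(m : ℤ) ≤ l → l ≤ (m : ℤ) → 0 ≤ q l)
    (hsum : ∑ l ∈ Finset.Icc (-(m : ℤ)) (m : ℤ), q l = 1)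
    (S0 K σ τ h r p : ℝ) (hS0 : 0 < S0) (hK : 0 < K) (hh : 0 < h) (hτ : 0 < τ)
    (hp0 : 0 ≤ p) (hp1 : p ≤ 1) (kbar lbar : ℕ) :
    VEtr n m q p (τ / n) S0 K σ h r 0 kbar lbar n 0 0 =
      VTT n m q p S0 K σ τ h r kbar lbar := by

  have hn0 : (n : ℝ) ≠ 0 := Nat.cast_ne_zero.2 (by omega)
  rw [VEtr_forward, VTT]
  simp only [zero_add]
  have hrτ : r * (n : ℝ) * (τ / n) = r * τ := by field_simp
  rw [hrτ]
  congr 1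
  have hpay : ∀ (j : ℕ) (k : ℤ),
      putPayoff n S0 K σ (τ / n) h j k = max (K - Sval S0 σ (τ / n) h (n : ℝ) j k) 0 := by
    intro j k
    rw [putPayoff, Sval, mul_comm h ((k : ℤ) : ℝ)]
  have hmaps : ∀ s ∈ (paths n m).filter
      (fun s => ∀ t ≤ n, -(lbar : ℤ) ≤ levelAt n s t ∧ levelAt n s t ≤ (kbar : ℤ)),
      levelAt n s n ∈ Finset.Icc (-(lbar : ℤ)) (kbar : ℤ) := by
    intro s hs
    rcases (Finset.mem_filter.1 hs).2 n le_rfl with ⟨h1, h2⟩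
    exact Finset.mem_Icc.2 ⟨h1, h2⟩
  rw [← Finset.sum_fiberwise_of_maps_to hmaps
    (fun s => pathWeight n q s * ∑ j' ∈ Finset.range (n + 1),
      binomP n p j' * max (K - Sval S0 σ (τ / n) h (n : ℝ) j' (levelAt n s n)) 0)]
  refine Finset.sum_congr rfl fun k hk => ?_
  have hset : (((paths n m).filter
        (fun s => ∀ t ≤ n, -(lbar : ℤ) ≤ levelAt n s t ∧ levelAt n s t ≤ (kbar : ℤ))).filter
        (fun s => levelAt n s n = k))
       = (paths n m).filter
        (fun s => levelAt n s n = k ∧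
          ∀ t ≤ n, -(lbar : ℤ) ≤ levelAt n s t ∧ levelAt n s t ≤ (kbar : ℤ)) := by
    ext s
    simp only [Finset.mem_filter]
    tauto
  rw [hset]
  have hG : ∀ s ∈ (paths n m).filter
      (fun s => levelAt n s n = k ∧
        ∀ t ≤ n, -(lbar : ℤ) ≤ levelAt n s t ∧ levelAt n s t ≤ (kbar : ℤ)),
      pathWeight n q s * ∑ j' ∈ Finset.range (n + 1),
        binomP n p j' * max (K - Sval S0 σ (τ / n) h (n : ℝ) j' (levelAt n s n)) 0
      = pathWeight n q s * ∑ j' ∈ Finset.range (n + 1),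
        binomP n p j' * max (K - Sval S0 σ (τ / n) h (n : ℝ) j' k) 0 := by
    intro s hs
    rw [(Finset.mem_filter.1 hs).2.1]
  rw [Finset.sum_congr rfl hG, ← Finset.sum_mul, qcut]
  rw [← Finset.sum_mul]
  rw [mul_comm]
  congr 1
  refine Finset.sum_congr rfl fun j' _ => ?_
  rw [hpay]
  ring
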